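/- In an orthogonal FDSLRM, for every x ∈ ℝⁿ and every j ∈ {1,…,l}, the BLUP natural estimator equals ρⱼ² times the original natural estimator: ((T̂x)ⱼ)² = ρⱼ² · (εᵀvⱼ)²/‖vⱼ‖⁴, where ε = M_F x is the OLS residual vector and ρⱼ = σⱼ²‖vⱼ‖²/(σ₀² + σⱼ²‖vⱼ‖²); moreover (εᵀvⱼ)² = (xᵀvⱼvⱼᵀx)·1, so ((T̂x)ⱼ)² = ρⱼ²·xᵀvⱼvⱼᵀx/‖vⱼ‖⁴. -/

import Mathlib

open Matrix

/-- In an orthogonal FDSLRM, for every `x` and every `j`, the BLUP natural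
estimator equals `ρⱼ²` times the original natural estimator:
`((T̂x)ⱼ)² = ρⱼ²(ε'vⱼ)²/‖vⱼ‖⁴` with `ε = M_F x`; moreover
`(ε'vⱼ)² = x'vⱼvⱼ'x`, hence `((T̂x)ⱼ)² = ρⱼ²·x'vⱼvⱼ'x/‖vⱼ‖⁴`. -/
theorem stmt_12 {n k l : ℕ} (hn : 0 < n) (hk : 0 < k) (hl : 0 < l)
    (hnkl : k + l < n)
    (F : Matrix (Fin n) (Fin k) ℝ) (hF : F.rank = k)
    (V : Matrix (Fin n) (Fin l) ℝ)
    (hcols : ∀ j : Fin l, (fun i => V i j) ≠ 0)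
    (nv : Fin l → ℝ) (hnv : ∀ j, nv j = ∑ i, V i j ^ 2)
    (hFV : Fᵀ * V = 0) (hVV : Vᵀ * V = Matrix.diagonal nv)
    (σ0 : ℝ) (hσ0 : 0 < σ0)
    (σ : Fin l → ℝ) (hσ : ∀ j, 0 < σ j)
    (D : Matrix (Fin l) (Fin l) ℝ) (hD : D = Matrix.diagonal σ)
    (Mf : Matrix (Fin n) (Fin n) ℝ) (hMf : Mf = 1 - F * (Fᵀ * F)⁻¹ * Fᵀ)
    (What : Matrix (Fin l) (Fin l) ℝ) (hWhat : What = Vᵀ * Mf * V + σ0 • D⁻¹)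
    (That : Matrix (Fin l) (Fin n) ℝ) (hThat : That = What⁻¹ * Vᵀ * Mf)
    (ρ : Fin l → ℝ) (hρ : ∀ j, ρ j = σ j * nv j / (σ0 + σ j * nv j)) :
    ∀ x : Fin n → ℝ, ∀ j : Fin l,
      (That.mulVec x j) ^ 2 = ρ j ^ 2 * (∑ i, Mf.mulVec x i * V i j) ^ 2 / nv j ^ 2 ∧
      (∑ i, Mf.mulVec x i * V i j) ^ 2 =
        x ⬝ᵥ (Matrix.of fun a b => V a j * V b j).mulVec x ∧
      (That.mulVec x j) ^ 2 =
        ρ j ^ 2 * (x ⬝ᵥ (Matrix.of fun a b => V a j * V b j).mulVec x) / nv j ^ 2 := by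
  -- basic positivity facts
  have hnvpos : ∀ j, 0 < nv j := by
    intro j
    rw [hnv j]
    obtain ⟨i, hi⟩ := Function.ne_iff.mp (hcols j)
    exact Finset.sum_pos' (fun i _ => sq_nonneg _)
      ⟨i, Finset.mem_univ i, lt_of_le_of_ne (sq_nonneg _) (Ne.symm (pow_ne_zero 2 hi))⟩
  -- Mf is symmetric
  have hMfT : Mfᵀ = Mf := by
    subst hMf
    have h1 : ((Fᵀ * F)⁻¹)ᵀ = (Fᵀ * F)⁻¹ := by
      rw [Matrix.transpose_nonsing_inv, Matrix.transpose_mul, Matrix.transpose_transpose]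
    simp [Matrix.transpose_sub, Matrix.transpose_mul, Matrix.mul_assoc, h1]
  -- Mf * V = V
  have hMfV : Mf * V = V := by
    subst hMf
    rw [Matrix.sub_mul, Matrix.one_mul, Matrix.mul_assoc, Matrix.mul_assoc, hFV,
      Matrix.mul_zero, Matrix.mul_zero, sub_zero]
  have hVMf : Vᵀ * Mf = Vᵀ := by
    calc Vᵀ * Mf = Vᵀ * Mfᵀ := by rw [hMfT]
    _ = (Mf * V)ᵀ := by rw [Matrix.transpose_mul]
    _ = Vᵀ := by rw [hMfV]
  set w : Fin l → ℝ := fun j => nv j + σ0 * (σ j)⁻¹ with hw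
  have hwpos : ∀ j, 0 < w j := fun j =>
    add_pos (hnvpos j) (mul_pos hσ0 (inv_pos.mpr (hσ j)))
  have hdiaginv : ∀ (v : Fin l → ℝ), (∀ a, v a ≠ 0) →
      (Matrix.diagonal v)⁻¹ = Matrix.diagonal (fun a => (v a)⁻¹) := by
    intro v hv
    apply Matrix.inv_eq_right_inv
    have h1 : (fun i => v i * (v i)⁻¹) = fun _ => (1:ℝ) :=
      funext fun a => mul_inv_cancel₀ (hv a)
    rw [Matrix.diagonal_mul_diagonal, h1, Matrix.diagonal_one]
  have hWd : What = Matrix.diagonal w := by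
    rw [hWhat, Matrix.mul_assoc, hMfV, hVV, hD, hdiaginv σ (fun a => (hσ a).ne')]
    ext a b
    rcases eq_or_ne a b with rfl | hab
    · simp [Matrix.diagonal, hw]
    · simp [Matrix.diagonal_apply_ne _ hab]
  have hWinv : What⁻¹ = Matrix.diagonal (fun j => (w j)⁻¹) := by
    rw [hWd, hdiaginv w (fun a => (hwpos a).ne')]
  have hThat' : That = Matrix.diagonal (fun j => (w j)⁻¹) * Vᵀ := by
    rw [hThat, Matrix.mul_assoc, hVMf, hWinv]
  intro x j
  set s : ℝ := ∑ i, V i j * x i with hs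
  have hT : That.mulVec x j = (w j)⁻¹ * s := by
    rw [hThat', ← Matrix.mulVec_mulVec, Matrix.mulVec_diagonal]
    simp [Matrix.mulVec, dotProduct, hs]
  have hε : (∑ i, Mf.mulVec x i * V i j) = s := by
    have : (∑ i, Mf.mulVec x i * V i j) = ((Vᵀ * Mf).mulVec x) j := by
      rw [← Matrix.mulVec_mulVec]
      simp [Matrix.mulVec, dotProduct, mul_comm]
    rw [this, hVMf]
    simp [Matrix.mulVec, dotProduct, hs]
  have hquad : x ⬝ᵥ (Matrix.of fun a b => V a j * V b j).mulVec x = s ^ 2 := by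
    simp only [dotProduct, Matrix.mulVec, Matrix.of_apply, hs]
    rw [sq, Finset.sum_mul_sum]
    refine Finset.sum_congr rfl fun a _ => ?_
    rw [Finset.mul_sum]
    exact Finset.sum_congr rfl fun b _ => by ring
  have hσj := (hσ j).ne'
  have hnvj := (hnvpos j).ne'
  have hden : σ0 + σ j * nv j ≠ 0 := (add_pos hσ0 (mul_pos (hσ j) (hnvpos j))).ne'
  have hwj := (hwpos j).ne'
  have hwval : (w j)⁻¹ = σ j / (σ0 + σ j * nv j) := by
    show (nv j + σ0 * (σ j)⁻¹)⁻¹ = σ j / (σ0 + σ j * nv j)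
    rw [eq_div_iff hden, inv_mul_eq_div,
      div_eq_iff (show (nv j + σ0 * (σ j)⁻¹) ≠ 0 from hwj)]
    field_simp
    ring
  have key : ((w j)⁻¹ * s) ^ 2 = ρ j ^ 2 * s ^ 2 / nv j ^ 2 := by
    rw [hρ j, hwval]
    field_simp
  refine ⟨?_, ?_, ?_⟩
  · rw [hT, hε, key]
  · rw [hε, hquad]
  · rw [hT, hquad, key]
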